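/- Let W be an integrable real random variable, α ∈ (0,1], and D, q real numbers such that P(W ≤ q) = α and E[W · 1_{W ≤ q}] = D·α. Then for every W_o > D one has E[max(1 - (W - D)/(W_o - D), 0)] ≥ α. -/

import Mathlib

open MeasureTheory

theorem stmt_6 {Ω : Type*} [MeasurableSpace Ω] (μ : Measure Ω) [IsProbabilityMeasure μ]
    (W : Ω → ℝ) (hW : Integrable W μ) (α : ℝ) (hα : α ∈ Set.Ioc (0 : ℝ) 1)
    (D q : ℝ) (hq : (μ {ω | W ω ≤ q}).toReal = α)
    (hD : ∫ ω in {ω | W ω ≤ q}, W ω ∂μ = D * α) :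
    ∀ Wo : ℝ, D < Wo →
      α ≤ ∫ ω, max (1 - (W ω - D) / (Wo - D)) 0 ∂μ := by
  intro Wo hWo
  set s : Set Ω := {ω | W ω ≤ q} with hs
  have hcpos : (0:ℝ) < Wo - D := by linarith
  have hf_int : Integrable (fun ω => 1 - (W ω - D) / (Wo - D)) μ :=
    (integrable_const 1).sub ((hW.sub (integrable_const D)).div_const _)
  have hg_int : Integrable (fun ω => max (1 - (W ω - D) / (Wo - D)) 0) μ := by
    simpa using hf_int.pos_part
  -- integral over s of the linear function equals α
  have hμs : ((μ.restrict s) Set.univ).toReal = α := by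
    rw [Measure.restrict_apply_univ]; exact hq
  have hWs : ∫ ω in s, W ω ∂μ = D * α := hD
  have hlin : ∫ ω in s, (1 - (W ω - D) / (Wo - D)) ∂μ = α := by
    have h1 : ∫ ω in s, (W ω - D) / (Wo - D) ∂μ
        = (∫ ω in s, (W ω - D) ∂μ) / (Wo - D) := integral_div _ _
    have h2 : ∫ ω in s, (W ω - D) ∂μ = D * α - D * α := by
      rw [integral_sub hW.restrict (integrable_const D), hWs, integral_const, Measure.real, hμs,
        smul_eq_mul]; ring
    have h3 : ∫ ω in s, (1:ℝ) ∂μ = α := by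
      rw [integral_const, Measure.real, hμs, smul_eq_mul, mul_one]
    have hint2 : Integrable (fun ω => (W ω - D) / (Wo - D)) (μ.restrict s) :=
      (hW.restrict.sub (integrable_const D)).div_const _
    rw [integral_sub (integrable_const 1).restrict hint2, h3, h1, h2]
    simp
  have hmono1 : ∫ ω in s, (1 - (W ω - D) / (Wo - D)) ∂μ
      ≤ ∫ ω in s, max (1 - (W ω - D) / (Wo - D)) 0 ∂μ := by
    refine integral_mono hf_int.restrict hg_int.restrict ?_
    intro ω; exact le_max_left _ _
  have hmono2 : ∫ ω in s, max (1 - (W ω - D) / (Wo - D)) 0 ∂μ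
      ≤ ∫ ω, max (1 - (W ω - D) / (Wo - D)) 0 ∂μ := by
    refine integral_mono_measure Measure.restrict_le_self ?_ hg_int
    exact Filter.Eventually.of_forall fun ω => le_max_right _ _
  linarith [hlin ▸ hmono1, hmono2]
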